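/- For n ≥ 2 and 1 ≤ k < n, if h_{n,k} denotes the number of permutations of [n] avoiding {3214, 3241, 4213, 4231} whose first entry is k, then h_{n,k} = ∑_{j=k-1}^{n-1} h_{n-1,j}, where h_{n-1,n-1} counts those permutations of [n-1] with first entry n-1. -/

import Mathlib

def Contains {n k : ℕ} (σ : Equiv.Perm (Fin n)) (τ : Fin k → ℕ) : Prop :=
  ∃ f : Fin k → Fin n, StrictMono f ∧ ∀ a b : Fin k, τ a < τ b ↔ σ (f a) < σ (f b)

def AvoidsT1 {n : ℕ} (σ : Equiv.Perm (Fin n)) : Prop :=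
  ¬ Contains σ ![2,1,0,3] ∧ ¬ Contains σ ![2,1,3,0] ∧
  ¬ Contains σ ![3,1,0,2] ∧ ¬ Contains σ ![3,1,2,0]

/-- `hT1 n k` = number of permutations of `[n]` avoiding `T₁` whose first entry
is `k` (1-based value `k`, i.e. 0-based value `k - 1`). -/
noncomputable def hT1 (n k : ℕ) : ℕ :=
  Nat.card {σ : Equiv.Perm (Fin n) // AvoidsT1 σ ∧
    ∀ i : Fin n, (i : ℕ) = 0 → ((σ i : ℕ) + 1 = k)}

/-! ### The "quad" characterization of containing a pattern from `T₁` -/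

def Quad {n : ℕ} (σ : Equiv.Perm (Fin n)) : Prop :=
  ∃ i j l m : Fin n, i < j ∧ j < l ∧ l < m ∧ σ j < σ i ∧
    ((σ l < σ j ∧ σ j < σ m) ∨ (σ m < σ j ∧ σ j < σ l))

lemma strictMono_vec4 {N : ℕ} {a b c d : Fin N} (h1 : a < b) (h2 : b < c) (h3 : c < d) :
    StrictMono ![a,b,c,d] := by
  rw [Fin.strictMono_iff_lt_succ]
  intro i
  have hi : i = 0 ∨ i = 1 ∨ i = 2 := by omega
  rcases hi with rfl | rfl | rfl
  · exact h1
  · exact h2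
  · exact h3

lemma not_avoids_of_quad {N : ℕ} {σ : Equiv.Perm (Fin N)} (h : Quad σ) : ¬ AvoidsT1 σ := by
  obtain ⟨i, j, l, m, h1, h2, h3, h4, h5⟩ := h
  rintro ⟨A1, A2, A3, A4⟩
  have hne : ∀ x y : Fin N, x ≠ y → σ x ≠ σ y := fun x y hxy e => hxy (σ.injective e)
  rcases h5 with ⟨hlj, hjm⟩ | ⟨hmj, hjl⟩
  · rcases lt_or_gt_of_ne (hne m i (lt_trans (lt_trans h1 h2) h3).ne') with hmi | him
    · refine A3 ⟨![i,j,l,m], strictMono_vec4 h1 h2 h3, ?_⟩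
      show ∀ a b : Fin 4, ![3,1,0,2] a < ![3,1,0,2] b ↔ σ (![i,j,l,m] a) < σ (![i,j,l,m] b)
      intro a b
      have ha : a = 0 ∨ a = 1 ∨ a = 2 ∨ a = 3 := by omega
      have hb : b = 0 ∨ b = 1 ∨ b = 2 ∨ b = 3 := by omega
      rcases ha with rfl | rfl | rfl | rfl <;> rcases hb with rfl | rfl | rfl | rfl <;>
        simp only [Matrix.cons_val_zero, Matrix.cons_val_one, Matrix.head_cons,
          Matrix.cons_val_two, Matrix.tail_cons, Matrix.cons_val_three,
          Matrix.head_fin_const] <;> omega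
    · refine A1 ⟨![i,j,l,m], strictMono_vec4 h1 h2 h3, ?_⟩
      show ∀ a b : Fin 4, ![2,1,0,3] a < ![2,1,0,3] b ↔ σ (![i,j,l,m] a) < σ (![i,j,l,m] b)
      intro a b
      have ha : a = 0 ∨ a = 1 ∨ a = 2 ∨ a = 3 := by omega
      have hb : b = 0 ∨ b = 1 ∨ b = 2 ∨ b = 3 := by omega
      rcases ha with rfl | rfl | rfl | rfl <;> rcases hb with rfl | rfl | rfl | rfl <;>
        simp only [Matrix.cons_val_zero, Matrix.cons_val_one, Matrix.head_cons,
          Matrix.cons_val_two, Matrix.tail_cons, Matrix.cons_val_three,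
          Matrix.head_fin_const] <;> omega
  · rcases lt_or_gt_of_ne (hne l i (lt_trans h1 h2).ne') with hli | hil
    · refine A4 ⟨![i,j,l,m], strictMono_vec4 h1 h2 h3, ?_⟩
      show ∀ a b : Fin 4, ![3,1,2,0] a < ![3,1,2,0] b ↔ σ (![i,j,l,m] a) < σ (![i,j,l,m] b)
      intro a b
      have ha : a = 0 ∨ a = 1 ∨ a = 2 ∨ a = 3 := by omega
      have hb : b = 0 ∨ b = 1 ∨ b = 2 ∨ b = 3 := by omega
      rcases ha with rfl | rfl | rfl | rfl <;> rcases hb with rfl | rfl | rfl | rfl <;>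
        simp only [Matrix.cons_val_zero, Matrix.cons_val_one, Matrix.head_cons,
          Matrix.cons_val_two, Matrix.tail_cons, Matrix.cons_val_three,
          Matrix.head_fin_const] <;> omega
    · refine A2 ⟨![i,j,l,m], strictMono_vec4 h1 h2 h3, ?_⟩
      show ∀ a b : Fin 4, ![2,1,3,0] a < ![2,1,3,0] b ↔ σ (![i,j,l,m] a) < σ (![i,j,l,m] b)
      intro a b
      have ha : a = 0 ∨ a = 1 ∨ a = 2 ∨ a = 3 := by omega
      have hb : b = 0 ∨ b = 1 ∨ b = 2 ∨ b = 3 := by omega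
      rcases ha with rfl | rfl | rfl | rfl <;> rcases hb with rfl | rfl | rfl | rfl <;>
        simp only [Matrix.cons_val_zero, Matrix.cons_val_one, Matrix.head_cons,
          Matrix.cons_val_two, Matrix.tail_cons, Matrix.cons_val_three,
          Matrix.head_fin_const] <;> omega

lemma quad_of_not_avoids {N : ℕ} {σ : Equiv.Perm (Fin N)} (h : ¬ AvoidsT1 σ) : Quad σ := by
  have hC : Contains σ ![2,1,0,3] ∨ Contains σ ![2,1,3,0] ∨
      Contains σ ![3,1,0,2] ∨ Contains σ ![3,1,2,0] := by
    unfold AvoidsT1 at h; tauto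
  rcases hC with ⟨f, hf, hiso⟩ | ⟨f, hf, hiso⟩ | ⟨f, hf, hiso⟩ | ⟨f, hf, hiso⟩ <;>
    refine ⟨f 0, f 1, f 2, f 3, hf (by decide), hf (by decide), hf (by decide), ?_, ?_⟩
  · exact (hiso 1 0).mp (by decide)
  · exact Or.inl ⟨(hiso 2 1).mp (by decide), (hiso 1 3).mp (by decide)⟩
  · exact (hiso 1 0).mp (by decide)
  · exact Or.inr ⟨(hiso 3 1).mp (by decide), (hiso 1 2).mp (by decide)⟩
  · exact (hiso 1 0).mp (by decide)
  · exact Or.inl ⟨(hiso 2 1).mp (by decide), (hiso 1 3).mp (by decide)⟩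
  · exact (hiso 1 0).mp (by decide)
  · exact Or.inr ⟨(hiso 3 1).mp (by decide), (hiso 1 2).mp (by decide)⟩

/-! ### Insertion of a value/position into a permutation -/

/-- Permutation of `Fin (M+1)` sending `q ↦ p` and `q.succAbove i ↦ p.succAbove (τ i)`. -/
def ins {M : ℕ} (p q : Fin (M + 1)) (τ : Equiv.Perm (Fin M)) : Equiv.Perm (Fin (M + 1)) :=
  ((finSuccEquiv' q).trans (Equiv.optionCongr τ)).trans (finSuccEquiv' p).symm

lemma ins_self {M : ℕ} (p q : Fin (M + 1)) (τ : Equiv.Perm (Fin M)) : ins p q τ q = p := by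
  simp [ins, finSuccEquiv'_at, finSuccEquiv'_symm_none]

lemma ins_succAbove {M : ℕ} (p q : Fin (M + 1)) (τ : Equiv.Perm (Fin M)) (i : Fin M) :
    ins p q τ (q.succAbove i) = p.succAbove (τ i) := by
  simp [ins, finSuccEquiv'_succAbove, finSuccEquiv'_symm_some]

lemma ins_injective {M : ℕ} (p q : Fin (M + 1)) : Function.Injective (ins p q) := by
  intro τ τ' h
  ext i
  have h2 : ins p q τ (q.succAbove i) = ins p q τ' (q.succAbove i) := by rw [h]
  rw [ins_succAbove, ins_succAbove] at h2
  rw [Fin.succAbove_right_injective h2]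

lemma ins_surjective {M : ℕ} (p q : Fin (M + 1)) (σ : Equiv.Perm (Fin (M + 1)))
    (hq : σ q = p) : ∃ τ, ins p q τ = σ := by
  classical
  set e : Option (Fin M) ≃ Option (Fin M) :=
    ((finSuccEquiv' q).symm.trans (σ.trans (finSuccEquiv' p))) with he
  have hnone : e none = none := by
    simp [he, finSuccEquiv'_symm_none, hq, finSuccEquiv'_at]
  refine ⟨e.removeNone, ?_⟩
  ext x
  rcases eq_or_ne x q with rfl | hx
  · rw [ins_self, hq]
  · obtain ⟨i, rfl⟩ := Fin.exists_succAbove_eq (Ne.symm (Ne.symm hx))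
    rw [ins_succAbove]
    have hsome : ∃ x', e (some i) = some x' := by
      rcases h : e (some i) with _ | x'
      · exfalso
        have : some i = (none : Option (Fin M)) := by
          rw [← hnone] at h
          exact e.injective h
        simp at this
      · exact ⟨x', rfl⟩
    have h1 : some (e.removeNone i) = e (some i) := Equiv.removeNone_some e hsome
    have h2 : e (some i) = finSuccEquiv' p (σ (q.succAbove i)) := by
      simp [he, finSuccEquiv'_symm_some]
    have : σ (q.succAbove i) = (finSuccEquiv' p).symm (some (e.removeNone i)) := by
      rw [h1, h2, Equiv.symm_apply_apply]
    rw [this, finSuccEquiv'_symm_some]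

/-! ### Transfer of quads through insertion -/

lemma quad_ins_of_quad {M : ℕ} (p q : Fin (M + 1)) (τ : Equiv.Perm (Fin M)) (h : Quad τ) :
    Quad (ins p q τ) := by
  obtain ⟨i, j, l, m, h1, h2, h3, h4, h5⟩ := h
  refine ⟨q.succAbove i, q.succAbove j, q.succAbove l, q.succAbove m,
    Fin.succAbove_lt_succAbove_iff.mpr h1, Fin.succAbove_lt_succAbove_iff.mpr h2,
    Fin.succAbove_lt_succAbove_iff.mpr h3, ?_, ?_⟩
  · rw [ins_succAbove, ins_succAbove]
    exact Fin.succAbove_lt_succAbove_iff.mpr h4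
  · simp only [ins_succAbove, Fin.succAbove_lt_succAbove_iff]
    exact h5

lemma quad_reflect {M : ℕ} (p q : Fin (M + 1)) (τ : Equiv.Perm (Fin M))
    {i j l m : Fin (M + 1)} (hi : i ≠ q) (hj : j ≠ q) (hl : l ≠ q) (hm : m ≠ q)
    (h1 : i < j) (h2 : j < l) (h3 : l < m)
    (h4 : ins p q τ j < ins p q τ i)
    (h5 : (ins p q τ l < ins p q τ j ∧ ins p q τ j < ins p q τ m) ∨
          (ins p q τ m < ins p q τ j ∧ ins p q τ j < ins p q τ l)) : Quad τ := by
  obtain ⟨i', rfl⟩ := Fin.exists_succAbove_eq hi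
  obtain ⟨j', rfl⟩ := Fin.exists_succAbove_eq hj
  obtain ⟨l', rfl⟩ := Fin.exists_succAbove_eq hl
  obtain ⟨m', rfl⟩ := Fin.exists_succAbove_eq hm
  rw [Fin.succAbove_lt_succAbove_iff] at h1 h2 h3
  simp only [ins_succAbove, Fin.succAbove_lt_succAbove_iff] at h4 h5
  exact ⟨i', j', l', m', h1, h2, h3, h4, h5⟩

lemma quad_reflect_B2 {m : ℕ} (p : Fin (m + 2)) (τ : Equiv.Perm (Fin (m + 1)))
    (hge : p ≤ (τ 0).castSucc) (h : Quad (ins p 0 τ)) : Quad τ := by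
  obtain ⟨i, j, l, mm, h1, h2, h3, h4, h5⟩ := h
  have hσ1 : p < ins p 0 τ 1 := by
    have e1 : ((0 : Fin (m + 2)).succAbove (0 : Fin (m + 1))) = (1 : Fin (m + 2)) := by
      rw [Fin.zero_succAbove]; rfl
    have : ins p 0 τ 1 = p.succAbove (τ 0) := by rw [← e1, ins_succAbove]
    rw [this, Fin.succAbove_of_le_castSucc _ _ hge]
    exact lt_of_le_of_lt hge Fin.castSucc_lt_succ
  rcases eq_or_ne i 0 with rfl | hi0
  · rw [ins_self] at h4
    have hj1 : j ≠ 1 := by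
      rintro rfl
      exact absurd h4 (not_lt.mpr (le_of_lt hσ1))
    have h1' : (1 : Fin (m + 2)) < j := by
      have hj0 : (0 : Fin (m + 2)) < j := h1
      rw [Fin.lt_def] at hj0 ⊢
      have : (j : ℕ) ≠ 1 := fun hc => hj1 (Fin.ext (by simpa using hc))
      simp only [Fin.val_one] at *
      omega
    refine quad_reflect p 0 τ (i := 1) (j := j) (l := l) (m := mm)
      ?_ ?_ ?_ ?_ h1' h2 h3 ?_ h5
    · exact one_ne_zero
    · exact (Fin.pos_of_ne_zero (fun hc => by subst hc; exact absurd h1 (lt_irrefl _))).ne'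
    · exact (lt_trans h1 h2).ne'
    · exact (lt_trans (lt_trans h1 h2) h3).ne'
    · exact lt_trans h4 hσ1
  · have hj0 : j ≠ 0 := (lt_trans (Fin.pos_of_ne_zero hi0) h1).ne'
    exact quad_reflect p 0 τ hi0 hj0 (lt_trans (Fin.pos_of_ne_zero hi0) (lt_trans h1 h2)).ne'
      (lt_trans (Fin.pos_of_ne_zero hi0) (lt_trans (lt_trans h1 h2) h3)).ne' h1 h2 h3 h4 h5

lemma quad_reflect_B1 {m : ℕ} (τ : Equiv.Perm (Fin (m + 1)))
    (h : Quad (ins (0 : Fin (m + 2)) 1 τ)) : Quad τ := by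
  obtain ⟨i, j, l, mm, h1, h2, h3, h4, h5⟩ := h
  have hj1 : j ≠ 1 := by
    rintro rfl
    rw [ins_self] at h4 h5
    rcases h5 with ⟨hc, -⟩ | ⟨hc, -⟩ <;> exact absurd hc (Fin.not_lt_zero _)
  have hi1 : i ≠ 1 := by
    rintro rfl
    rw [ins_self] at h4
    exact absurd h4 (Fin.not_lt_zero _)
  have hl1 : l ≠ 1 := by
    rintro rfl
    rw [Fin.lt_def] at h1 h2
    simp only [Fin.val_one] at h2
    omega
  have hm1 : mm ≠ 1 := by
    rintro rfl
    rw [Fin.lt_def] at h2 h3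
    simp only [Fin.val_one] at h3
    omega
  exact quad_reflect 0 1 τ hi1 hj1 hl1 hm1 h1 h2 h3 h4 h5

/-! ### Counting lemmas -/

lemma natcard_fiber_sum {α ι : Type*} [Fintype α] [Fintype ι] (P : α → Prop) (f : α → ι) :
    Nat.card {x // P x} = ∑ v : ι, Nat.card {x : α // P x ∧ f x = v} := by
  classical
  rw [← Nat.card_congr (Equiv.sigmaFiberEquiv (fun x : {x // P x} => f x.1))]
  rw [Nat.card_eq_fintype_card, Fintype.card_sigma]
  refine Finset.sum_congr rfl fun v _ => ?_
  rw [← Nat.card_eq_fintype_card]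
  exact Nat.card_congr (Equiv.subtypeSubtypeEquivSubtypeInter P (fun x => f x = v))

lemma card_ins_bij {M : ℕ} (p q : Fin (M + 1)) (P : Equiv.Perm (Fin (M + 1)) → Prop)
    (Q : Equiv.Perm (Fin M) → Prop)
    (h1 : ∀ τ, Q τ → P (ins p q τ)) (h2 : ∀ σ, P σ → σ q = p)
    (h3 : ∀ τ, P (ins p q τ) → Q τ) :
    Nat.card {σ : Equiv.Perm (Fin (M + 1)) // P σ} = Nat.card {τ : Equiv.Perm (Fin M) // Q τ} := by
  refine (Nat.card_congr (Equiv.ofBijective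
    (fun t : {τ : Equiv.Perm (Fin M) // Q τ} =>
      (⟨ins p q t.1, h1 t.1 t.2⟩ : {σ : Equiv.Perm (Fin (M + 1)) // P σ})) ⟨?_, ?_⟩)).symm
  · intro t t' h
    exact Subtype.ext (ins_injective p q (congrArg Subtype.val h))
  · rintro ⟨σ, hσ⟩
    obtain ⟨τ, hτ⟩ := ins_surjective p q σ (h2 σ hσ)
    exact ⟨⟨τ, h3 τ (by rw [hτ]; exact hσ)⟩, Subtype.ext hτ⟩

lemma hT1_succ_eq (M j : ℕ) (hj : 1 ≤ j) (t : Fin (M + 1)) (ht : (t : ℕ) = j - 1) :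
    hT1 (M + 1) j = Nat.card {τ : Equiv.Perm (Fin (M + 1)) //
      AvoidsT1 τ ∧ τ 0 = t} := by
  unfold hT1
  refine Nat.card_congr (Equiv.subtypeEquivRight fun τ => ?_)
  constructor
  · rintro ⟨hA, hc⟩
    have h0 := hc 0 rfl
    exact ⟨hA, Fin.ext (show ((τ 0 : Fin (M + 1)) : ℕ) = (t : ℕ) by omega)⟩
  · rintro ⟨hA, hc⟩
    refine ⟨hA, fun i hi => ?_⟩
    have hi0 : i = 0 := Fin.ext (by simpa using hi)
    subst hi0
    rw [hc]
    omega

lemma hT1_zero (M : ℕ) : hT1 (M + 1) 0 = 0 := by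
  unfold hT1
  haveI : IsEmpty {σ : Equiv.Perm (Fin (M + 1)) // AvoidsT1 σ ∧
      ∀ i : Fin (M + 1), (i : ℕ) = 0 → ((σ i : ℕ) + 1 = 0)} := by
    refine ⟨fun ⟨σ, _, hc⟩ => ?_⟩
    have := hc 0 rfl
    omega
  exact Nat.card_of_isEmpty

lemma card_eq_zero_of_eq {m : ℕ} (p : Fin (m + 2)) :
    Nat.card {σ : Equiv.Perm (Fin (m + 2)) // AvoidsT1 σ ∧ σ 0 = p ∧ σ 1 = p} = 0 := by
  haveI : IsEmpty {σ : Equiv.Perm (Fin (m + 2)) // AvoidsT1 σ ∧ σ 0 = p ∧ σ 1 = p} := by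
    refine ⟨fun ⟨σ, _, h0, h1⟩ => ?_⟩
    have : (0 : Fin (m + 2)) = 1 := σ.injective (h0.trans h1.symm)
    have := congrArg Fin.val this
    simp at this
  exact Nat.card_of_isEmpty

lemma card_mid_zero {m : ℕ} (p v : Fin (m + 2)) (h0 : 0 < v) (hvp : v < p)
    (hpl : (p : ℕ) ≤ m) :
    Nat.card {σ : Equiv.Perm (Fin (m + 2)) // AvoidsT1 σ ∧ σ 0 = p ∧ σ 1 = v} = 0 := by
  haveI : IsEmpty {σ : Equiv.Perm (Fin (m + 2)) // AvoidsT1 σ ∧ σ 0 = p ∧ σ 1 = v} := by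
    refine ⟨fun ⟨σ, hA, h0', h1'⟩ => ?_⟩
    set L : Fin (m + 2) := Fin.last (m + 1) with hL
    set a : Fin (m + 2) := σ.symm 0 with ha
    set b : Fin (m + 2) := σ.symm L with hb
    have hσa : σ a = 0 := σ.apply_symm_apply 0
    have hσb : σ b = L := σ.apply_symm_apply L
    have hvL : v < L := by
      rw [Fin.lt_def] at hvp ⊢
      simp only [hL, Fin.val_last]
      omega
    have ha0 : a ≠ 0 := by
      intro hc
      rw [hc, h0'] at hσa
      have hp0 : (p : ℕ) = 0 := by simpa using congrArg Fin.val hσa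
      simp only [Fin.lt_def, Fin.val_zero] at h0 hvp
      omega
    have ha1 : a ≠ 1 := by
      intro hc; rw [hc, h1'] at hσa
      rw [hσa] at h0; exact absurd h0 (lt_irrefl _)
    have hb0 : b ≠ 0 := by
      intro hc; rw [hc, h0'] at hσb
      have := congrArg Fin.val hσb; simp [hL] at this; omega
    have hb1 : b ≠ 1 := by
      intro hc; rw [hc, h1'] at hσb
      rw [hσb] at hvL; exact absurd hvL (lt_irrefl _)
    have hab : a ≠ b := by
      intro hc; rw [hc, hσb] at hσa
      have := congrArg Fin.val hσa; simp [hL] at this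
    have h01 : (0 : Fin (m + 2)) < 1 := by
      rw [Fin.lt_def]; simp
    have h1a : (1 : Fin (m + 2)) < a := by
      rw [Fin.lt_def]
      have c0 : (a : ℕ) ≠ 0 := fun hc => ha0 (Fin.ext (by simpa using hc))
      have c1 : (a : ℕ) ≠ 1 := fun hc => ha1 (Fin.ext (by simpa using hc))
      simp only [Fin.val_one]; omega
    have h1b : (1 : Fin (m + 2)) < b := by
      rw [Fin.lt_def]
      have c0 : (b : ℕ) ≠ 0 := fun hc => hb0 (Fin.ext (by simpa using hc))
      have c1 : (b : ℕ) ≠ 1 := fun hc => hb1 (Fin.ext (by simpa using hc))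
      simp only [Fin.val_one]; omega
    have hq : Quad σ := by
      rcases lt_or_gt_of_ne hab with hlt | hgt
      · exact ⟨0, 1, a, b, h01, h1a, hlt, by rw [h0', h1']; exact hvp,
          Or.inl ⟨by rw [hσa, h1']; exact h0, by rw [hσb, h1']; exact hvL⟩⟩
      · exact ⟨0, 1, b, a, h01, h1b, hgt, by rw [h0', h1']; exact hvp,
          Or.inr ⟨by rw [hσa, h1']; exact h0, by rw [hσb, h1']; exact hvL⟩⟩
    exact not_avoids_of_quad hq hA
  exact Nat.card_of_isEmpty

/-! ### The two bijections -/

lemma card_B2 {m : ℕ} (p v : Fin (m + 2)) (hv : p < v) (v' : Fin (m + 1))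
    (hv' : (v' : ℕ) = (v : ℕ) - 1) :
    Nat.card {σ : Equiv.Perm (Fin (m + 2)) // AvoidsT1 σ ∧ σ 0 = p ∧ σ 1 = v} =
    Nat.card {τ : Equiv.Perm (Fin (m + 1)) // AvoidsT1 τ ∧ τ 0 = v'} := by
  have hple : p ≤ v'.castSucc := by
    rw [Fin.le_def]
    rw [Fin.lt_def] at hv
    simp only [Fin.coe_castSucc, hv']
    omega
  have hsA : p.succAbove v' = v := by
    rw [Fin.succAbove_of_le_castSucc _ _ hple]
    refine Fin.ext ?_
    rw [Fin.val_succ]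
    rw [Fin.lt_def] at hv
    simp only [hv']
    omega
  have e1 : ((0 : Fin (m + 2)).succAbove (0 : Fin (m + 1))) = (1 : Fin (m + 2)) := by
    rw [Fin.zero_succAbove]; rfl
  refine card_ins_bij p 0 _ _ ?_ (fun σ h => h.2.1) ?_
  · rintro τ ⟨hA, ht0⟩
    have hge : p ≤ (τ 0).castSucc := by rw [ht0]; exact hple
    refine ⟨?_, ins_self p 0 τ, ?_⟩
    · by_contra hc
      exact not_avoids_of_quad (quad_reflect_B2 p τ hge (quad_of_not_avoids hc)) hA
    · rw [← e1, ins_succAbove, ht0, hsA]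
  · rintro τ ⟨hA, -, h1⟩
    refine ⟨?_, ?_⟩
    · by_contra hc
      exact not_avoids_of_quad (quad_ins_of_quad p 0 τ (quad_of_not_avoids hc)) hA
    · rw [← e1, ins_succAbove] at h1
      exact Fin.succAbove_right_injective (h1.trans hsA.symm)

lemma card_B1 {m k : ℕ} (hk2 : 2 ≤ k) (p : Fin (m + 2)) (hp : (p : ℕ) = k - 1)
    (s : Fin (m + 1)) (hs : (s : ℕ) = k - 2) :
    Nat.card {σ : Equiv.Perm (Fin (m + 2)) // AvoidsT1 σ ∧ σ 0 = p ∧ σ 1 = 0} =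
    Nat.card {τ : Equiv.Perm (Fin (m + 1)) // AvoidsT1 τ ∧ τ 0 = s} := by
  have hssucc : s.succ = p := by
    refine Fin.ext ?_
    rw [Fin.val_succ, hp, hs]
    omega
  have e0 : ((1 : Fin (m + 2)).succAbove (0 : Fin (m + 1))) = (0 : Fin (m + 2)) := by
    rw [Fin.succAbove_of_castSucc_lt]
    · rfl
    · rw [Fin.lt_def]; simp
  refine card_ins_bij (0 : Fin (m + 2)) 1 _ _ ?_ (fun σ h => h.2.2) ?_
  · rintro τ ⟨hA, ht0⟩
    refine ⟨?_, ?_, ins_self 0 1 τ⟩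
    · by_contra hc
      exact not_avoids_of_quad (quad_reflect_B1 τ (quad_of_not_avoids hc)) hA
    · have key := ins_succAbove (0 : Fin (m + 2)) 1 τ 0
      rw [e0] at key
      rw [key, Fin.zero_succAbove, ht0, hssucc]
  · rintro τ ⟨hA, h0, -⟩
    refine ⟨?_, ?_⟩
    · by_contra hc
      exact not_avoids_of_quad (quad_ins_of_quad 0 1 τ (quad_of_not_avoids hc)) hA
    · have key := ins_succAbove (0 : Fin (m + 2)) 1 τ 0
      rw [e0] at key
      rw [key, Fin.zero_succAbove] at h0
      exact Fin.succ_injective _ (h0.trans hssucc.symm)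

/-! ### Main theorem -/

theorem hT1_recurrence (n k : ℕ) (hn : 2 ≤ n) (hk1 : 1 ≤ k) (hkn : k < n) :
    hT1 n k = ∑ j ∈ Finset.Icc (k - 1) (n - 1), hT1 (n - 1) j := by
  obtain ⟨m, rfl⟩ : ∃ m, n = m + 2 := ⟨n - 2, by omega⟩
  have hn1 : m + 2 - 1 = m + 1 := rfl
  rw [hn1]
  set p : Fin (m + 2) := ⟨k - 1, by omega⟩ with hp
  set c : Fin (m + 2) → ℕ := fun v =>
    Nat.card {σ : Equiv.Perm (Fin (m + 2)) // AvoidsT1 σ ∧ σ 0 = p ∧ σ 1 = v} with hc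
  have step1 : hT1 (m + 2) k = ∑ v : Fin (m + 2), c v := by
    rw [hT1_succ_eq (m + 1) k hk1 p (by simp [hp])]
    rw [natcard_fiber_sum (fun σ : Equiv.Perm (Fin (m + 2)) => AvoidsT1 σ ∧ σ 0 = p)
      (fun σ => σ 1)]
    refine Finset.sum_congr rfl fun v _ => ?_
    exact Nat.card_congr (Equiv.subtypeEquivRight fun σ => and_assoc)
  set F : ℕ → ℕ := fun i => if h : i < m + 2 then c ⟨i, h⟩ else 0 with hF
  have step2 : ∑ v : Fin (m + 2), c v = ∑ i ∈ Finset.range (m + 2), F i := by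
    rw [← Fin.sum_univ_eq_sum_range F (m + 2)]
    refine Finset.sum_congr rfl fun v _ => ?_
    rw [hF]
    simp only
    rw [dif_pos v.isLt, Fin.eta]
  have hmid : ∀ i ∈ Finset.range (m + 2), 1 ≤ i → i < k → F i = 0 := by
    intro i hi h1 h2
    simp only [Finset.mem_range] at hi
    rw [hF]
    simp only
    rw [dif_pos hi]
    rcases eq_or_lt_of_le (Nat.le_sub_one_of_lt h2) with heq | hlt
    · have : (⟨i, hi⟩ : Fin (m + 2)) = p := Fin.ext (by simp [hp, heq])
      rw [hc]; simp only
      rw [this]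
      exact card_eq_zero_of_eq p
    · refine card_mid_zero p ⟨i, hi⟩ ?_ ?_ ?_
      · rw [Fin.lt_def]; simp only [Fin.val_zero, Fin.val_mk]; omega
      · rw [Fin.lt_def]; simp only [hp]; omega
      · simp only [hp]; omega
  have hB2 : ∀ i ∈ Finset.range (m + 2), k ≤ i → F i = hT1 (m + 1) i := by
    intro i hi hki
    simp only [Finset.mem_range] at hi
    rw [hF]
    simp only
    rw [dif_pos hi]
    have hv : p < (⟨i, hi⟩ : Fin (m + 2)) := by
      rw [Fin.lt_def]; simp only [hp]; omega
    rw [hc]; simp only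
    obtain ⟨t, ht⟩ : ∃ t : Fin (m + 1), (t : ℕ) = i - 1 := ⟨⟨i - 1, by omega⟩, rfl⟩
    rw [card_B2 p ⟨i, hi⟩ hv t (by simpa using ht), hT1_succ_eq m i (by omega) t ht]
  have hF0 : F 0 = hT1 (m + 1) (k - 1) := by
    rw [hF]
    simp only
    rw [dif_pos (by omega : 0 < m + 2)]
    rcases eq_or_lt_of_le hk1 with h1 | h2
    · -- k = 1
      have hk : k = 1 := h1.symm
      subst hk
      have hp0 : (⟨0, by omega⟩ : Fin (m + 2)) = p := Fin.ext (by simp [hp])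
      rw [hc]; simp only
      rw [hp0, card_eq_zero_of_eq p]
      exact (hT1_zero m).symm
    · -- k ≥ 2
      have h0 : (⟨0, by omega⟩ : Fin (m + 2)) = (0 : Fin (m + 2)) :=
        Fin.ext (by simp)
      rw [hc]; simp only
      obtain ⟨t, ht⟩ : ∃ t : Fin (m + 1), (t : ℕ) = k - 2 := ⟨⟨k - 2, by omega⟩, rfl⟩
      rw [h0, card_B1 h2 p (by simp [hp]) t ht,
        hT1_succ_eq m (k - 1) (by omega) t (by omega)]
  have hsplit : Finset.range (m + 2) = insert 0 (Finset.Ico 1 (m + 2)) := by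
    ext x; simp; omega
  have hsub : ∑ i ∈ Finset.Ico 1 (m + 2), F i = ∑ i ∈ Finset.Ico k (m + 2), F i := by
    refine (Finset.sum_subset (Finset.Ico_subset_Ico (by omega) le_rfl) ?_).symm
    intro x hx hnx
    simp only [Finset.mem_Ico] at hx hnx
    exact hmid x (by simp; omega) hx.1 (by omega)
  have hIco : Finset.Ico k (m + 2) = Finset.Icc k (m + 1) := by
    ext x; simp; omega
  have hIcc : Finset.Icc (k - 1) (m + 1) = insert (k - 1) (Finset.Icc k (m + 1)) := by
    ext x; simp; omega
  rw [step1, step2, hsplit, Finset.sum_insert (by simp), hsub, hIco, hF0,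
    hIcc, Finset.sum_insert (by simp; omega)]
  congr 1
  refine Finset.sum_congr rfl fun i hi => ?_
  simp only [Finset.mem_Icc] at hi
  exact hB2 i (by simp; omega) hi.1
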